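/- Let n be odd and ρ = c₁ξ₁ξ₁† + c₂ξ₂ξ₂† with c₁ + c₂ = 1, c₁, c₂ > 0, and ξ₁, ξ₂ ∈ ℂ^{2ⁿ} unit vectors. Then the Lorentz invariant satisfies I_ρ = -2c₁c₂|ξ₁ᵀ ε_n ξ₂|², and hence -1/2 ≤ I_ρ ≤ 0. -/

import Mathlib

open Matrix

noncomputable def eps : Matrix (Fin 2) (Fin 2) ℂ := !![0, 1; -1, 0]

noncomputable def epsPow (n : ℕ) : Matrix (Fin n → Fin 2) (Fin n → Fin 2) ℂ :=
  Matrix.of fun i j => ∏ k, eps (i k) (j k)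

lemma eps_antisym (a b : Fin 2) : eps b a = -eps a b := by
  fin_cases a <;> fin_cases b <;> norm_num [eps]

lemma eps_conj (a b : Fin 2) : (starRingEnd ℂ) (eps a b) = eps a b := by
  fin_cases a <;> fin_cases b <;> norm_num [eps]

lemma eps_sum (x y : Fin 2) :
    ∑ a : Fin 2, eps a x * eps a y = if x = y then 1 else 0 := by
  fin_cases x <;> fin_cases y <;> norm_num [eps, Fin.sum_univ_two]

lemma epsPow_transpose {n : ℕ} (hn : Odd n) : (epsPow n)ᵀ = -epsPow n := by
  ext i j
  simp only [transpose_apply, neg_apply, epsPow, of_apply]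
  calc ∏ k, eps (j k) (i k) = ∏ k, (-1 : ℂ) * eps (i k) (j k) := by
        refine Finset.prod_congr rfl fun k _ => ?_
        rw [eps_antisym]; ring
    _ = (-1 : ℂ) ^ n * ∏ k, eps (i k) (j k) := by
        rw [Finset.prod_mul_distrib, Finset.prod_const, Finset.card_univ,
          Fintype.card_fin]
    _ = -∏ k, eps (i k) (j k) := by rw [hn.neg_one_pow]; ring

lemma epsPow_conj {n : ℕ} (i j : Fin n → Fin 2) :
    (starRingEnd ℂ) (epsPow n i j) = epsPow n i j := by
  simp only [epsPow, of_apply, map_prod, eps_conj]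

lemma epsPow_orth (n : ℕ) : (epsPow n)ᵀ * epsPow n = 1 := by
  ext i j
  simp only [Matrix.mul_apply, transpose_apply, epsPow, of_apply, ← Finset.prod_mul_distrib]
  have h1 : ∑ k : Fin n → Fin 2, ∏ m, eps (k m) (i m) * eps (k m) (j m)
      = ∏ m, ∑ a : Fin 2, eps a (i m) * eps a (j m) := by
    rw [← Finset.sum_prod_piFinset, Fintype.piFinset_univ]
  rw [h1, Finset.prod_congr rfl fun m _ => eps_sum (i m) (j m)]
  by_cases h : i = j
  · subst h; simp [Matrix.one_apply]
  · obtain ⟨m, hm⟩ : ∃ m, i m ≠ j m := by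
      by_contra hc; push_neg at hc; exact h (funext hc)
    rw [Matrix.one_apply_ne h, Finset.prod_eq_zero (Finset.mem_univ m)]
    simp [hm]

section aux
set_option linter.unusedSectionVars false
variable {V : Type*} [Fintype V] [DecidableEq V]

lemma vecMulVec_mul (a b : V → ℂ) (M : Matrix V V ℂ) :
    vecMulVec a b * M = vecMulVec a (b ᵥ* M) := by
  ext i j
  simp [Matrix.mul_apply, vecMulVec_apply, vecMul, dotProduct, Finset.mul_sum, mul_assoc]

lemma vecMulVec_mul_vecMulVec (a b c d : V → ℂ) :
    vecMulVec a b * vecMulVec c d = (b ⬝ᵥ c) • vecMulVec a d := by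
  ext i j
  simp [Matrix.mul_apply, vecMulVec_apply, dotProduct, Finset.sum_mul, Finset.mul_sum]
  refine Finset.sum_congr rfl fun k _ => by ring

lemma trace_vecMulVec' (a b : V → ℂ) : (vecMulVec a b).trace = a ⬝ᵥ b := by
  simp [Matrix.trace, vecMulVec_apply, Matrix.diag, dotProduct]

lemma vecMulVec_transpose' (a b : V → ℂ) : (vecMulVec a b)ᵀ = vecMulVec b a := by
  ext i j; simp [vecMulVec_apply, mul_comm]

lemma trace_form (a b c d : V → ℂ) (E : Matrix V V ℂ) :
    (vecMulVec a b * E * vecMulVec c d * E).trace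
      = (b ⬝ᵥ (E *ᵥ c)) * (d ⬝ᵥ (E *ᵥ a)) := by
  rw [_root_.vecMulVec_mul, _root_.vecMulVec_mul_vecMulVec, Matrix.smul_mul, _root_.vecMulVec_mul,
    Matrix.trace_smul, trace_vecMulVec', smul_eq_mul, dotProduct_mulVec,
    dotProduct_mulVec, dotProduct_comm a (d ᵥ* E)]

end aux

theorem stmt6 (n : ℕ) (hn : Odd n) (c1 c2 : ℝ) (hc : c1 + c2 = 1)
    (hc1 : 0 < c1) (hc2 : 0 < c2)
    (ξ1 ξ2 : (Fin n → Fin 2) → ℂ)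
    (hu1 : (∑ i, ‖ξ1 i‖ ^ 2) = 1)
    (hu2 : (∑ i, ‖ξ2 i‖ ^ 2) = 1) :
    (((c1 : ℂ) • vecMulVec ξ1 (star ξ1) + (c2 : ℂ) • vecMulVec ξ2 (star ξ2))ᵀ
        * epsPow n *
      ((c1 : ℂ) • vecMulVec ξ1 (star ξ1) + (c2 : ℂ) • vecMulVec ξ2 (star ξ2))
        * epsPow n).trace
      = ((-2 * c1 * c2 * ‖ξ1 ⬝ᵥ (epsPow n *ᵥ ξ2)‖ ^ 2 : ℝ) : ℂ) ∧
    -(1 / 2) ≤ -2 * c1 * c2 * ‖ξ1 ⬝ᵥ (epsPow n *ᵥ ξ2)‖ ^ 2 ∧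
    -2 * c1 * c2 * ‖ξ1 ⬝ᵥ (epsPow n *ᵥ ξ2)‖ ^ 2 ≤ 0 := by
  set E := epsPow n with hE
  set s := ξ1 ⬝ᵥ (E *ᵥ ξ2) with hs
  set t := ‖s‖ ^ 2 with ht
  -- skewness facts
  have hskew : Eᵀ = -E := epsPow_transpose hn
  have hanti : ∀ u v : (Fin n → Fin 2) → ℂ, v ⬝ᵥ (E *ᵥ u) = -(u ⬝ᵥ (E *ᵥ v)) := by
    intro u v
    calc v ⬝ᵥ (E *ᵥ u) = (v ᵥ* E) ⬝ᵥ u := dotProduct_mulVec v E u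
      _ = (Eᵀ *ᵥ v) ⬝ᵥ u := by rw [Matrix.mulVec_transpose]
      _ = ((-E) *ᵥ v) ⬝ᵥ u := by rw [hskew]
      _ = -(u ⬝ᵥ (E *ᵥ v)) := by
          rw [Matrix.neg_mulVec, neg_dotProduct, dotProduct_comm]
  have hzero : ∀ u : (Fin n → Fin 2) → ℂ, u ⬝ᵥ (E *ᵥ u) = 0 := by
    intro u
    have := hanti u u
    linear_combination this / 2
  -- conjugation
  have hconj : ∀ u v : (Fin n → Fin 2) → ℂ,
      (star u) ⬝ᵥ (E *ᵥ (star v)) = (starRingEnd ℂ) (u ⬝ᵥ (E *ᵥ v)) := by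
    intro u v
    rw [hE]
    simp only [dotProduct, mulVec, Pi.star_apply, map_sum, _root_.map_mul,
      Complex.star_def, epsPow_conj, dotProduct]
  -- the four trace terms
  set A := vecMulVec ξ1 (star ξ1) with hA
  set B := vecMulVec ξ2 (star ξ2) with hB
  have hT11 : (Aᵀ * E * A * E).trace = 0 := by
    rw [hA, vecMulVec_transpose', trace_form, hzero]; ring
  have hT22 : (Bᵀ * E * B * E).trace = 0 := by
    rw [hB, vecMulVec_transpose', trace_form, hzero]; ring
  have hT12 : (Aᵀ * E * B * E).trace = -((t : ℝ) : ℂ) := by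
    have hts : ((t : ℝ) : ℂ) = s * (starRingEnd ℂ) s := by
      rw [ht]; push_cast [Complex.sq_norm]; rw [Complex.mul_conj]
    rw [hA, hB, vecMulVec_transpose', trace_form, hconj, hanti ξ1 ξ2, map_neg, ← hs,
      hts]
    ring
  have hT21 : (Bᵀ * E * A * E).trace = -((t : ℝ) : ℂ) := by
    have hts : ((t : ℝ) : ℂ) = s * (starRingEnd ℂ) s := by
      rw [ht]; push_cast [Complex.sq_norm]; rw [Complex.mul_conj]
    rw [hB, hA, vecMulVec_transpose', trace_form, hconj, hanti ξ1 ξ2, ← hs, hts]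
    ring
  have hexpand :
      (((c1 : ℂ) • A + (c2 : ℂ) • B)ᵀ * E * ((c1 : ℂ) • A + (c2 : ℂ) • B) * E).trace
        = (c1 : ℂ) ^ 2 * (Aᵀ * E * A * E).trace
          + (c1 : ℂ) * (c2 : ℂ) * (Aᵀ * E * B * E).trace
          + (c2 : ℂ) * (c1 : ℂ) * (Bᵀ * E * A * E).trace
          + (c2 : ℂ) ^ 2 * (Bᵀ * E * B * E).trace := by
    simp only [transpose_add, transpose_smul, Matrix.add_mul, Matrix.mul_add,
      Matrix.smul_mul, Matrix.mul_smul, Matrix.trace_add, Matrix.trace_smul,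
      smul_eq_mul]
    ring
  -- norm of E *ᵥ ξ2
  have hbnorm : (∑ i, ‖(E *ᵥ ξ2) i‖ ^ 2) = 1 := by
    have hstar : star (E *ᵥ ξ2) = E *ᵥ star ξ2 := by
      funext i
      simp only [Pi.star_apply, mulVec, dotProduct, hE, Complex.star_def, map_sum,
        _root_.map_mul, epsPow_conj]
    have hvm : (E *ᵥ star ξ2) ᵥ* E = star ξ2 := by
      rw [← Matrix.vecMul_transpose, Matrix.vecMul_vecMul, hE, epsPow_orth,
        Matrix.vecMul_one]
    have h1 : star (E *ᵥ ξ2) ⬝ᵥ (E *ᵥ ξ2) = star ξ2 ⬝ᵥ ξ2 := by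
      rw [hstar, dotProduct_mulVec, hvm]
    have h2 : ∀ u : (Fin n → Fin 2) → ℂ,
        star u ⬝ᵥ u = ((∑ i, ‖u i‖ ^ 2 : ℝ) : ℂ) := by
      intro u
      rw [Complex.ofReal_sum, dotProduct]
      refine Finset.sum_congr rfl fun i _ => ?_
      rw [Pi.star_apply, Complex.star_def, Complex.sq_norm,
        ← Complex.normSq_eq_conj_mul_self]
    have := h1
    rw [h2, h2, hu2] at this
    exact_mod_cast this
  -- Cauchy-Schwarz : t ≤ 1
  have ht1 : t ≤ 1 := by
    have habs : ‖s‖ ≤ ∑ i, ‖ξ1 i‖ * ‖(E *ᵥ ξ2) i‖ := by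
      rw [hs]
      refine le_trans (norm_sum_le _ _) (le_of_eq ?_)
      exact Finset.sum_congr rfl fun i _ => norm_mul _ _
    have hCS := Finset.sum_mul_sq_le_sq_mul_sq Finset.univ
      (fun i => ‖ξ1 i‖) (fun i => ‖(E *ᵥ ξ2) i‖)
    rw [hu1, hbnorm, one_mul] at hCS
    have h0 : (0 : ℝ) ≤ ‖s‖ := norm_nonneg s
    calc t = ‖s‖ ^ 2 := ht
      _ ≤ (∑ i, ‖ξ1 i‖ * ‖(E *ᵥ ξ2) i‖) ^ 2 := by
          exact pow_le_pow_left₀ h0 habs 2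
      _ ≤ 1 := hCS
  have ht0 : 0 ≤ t := by rw [ht]; positivity
  have hc14 : c1 * c2 ≤ 1 / 4 := by nlinarith [sq_nonneg (c1 - c2)]
  refine ⟨?_, ?_, ?_⟩
  · rw [hexpand, hT11, hT22, hT12, hT21]
    push_cast
    ring
  · nlinarith [mul_pos hc1 hc2]
  · nlinarith [mul_pos hc1 hc2]
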